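/- For every even k ≥ 2, every real number c with 1 ≤ c ≤ (2ℓ_k-1)², and every ω ∈ C₊,k: f₀(ω)·(2ℓ_k-1)² ≥ 10·( r_k·(2ℓ_k-1) + (2ℓ_k-1)⁻¹·log c )·(2ℓ_k-1). The same holds for every odd k ≥ 3 and every ω ∈ C₋,k. -/

import Mathlib

/-- The three-letter alphabet `Σ = {-1, 0, +1}`. -/
inductive Letter : Type
  | neg : Letter
  | zero : Letter
  | pos : Letter
deriving DecidableEq

instance : Fintype Letter where
  elems := {Letter.neg, Letter.zero, Letter.pos}
  complete := by intro x; cases x <;> simp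

/-- `f₀(ω)`: the frequency of the symbol `0` in the finite string `ω`. -/
noncomputable def f0 {n : ℕ} (ω : Fin n → Letter) : ℝ :=
  ((Finset.univ.filter fun i => ω i = Letter.zero).card : ℝ) / n

/-- The binary entropy `H(t) = -t log t - (1-t) log (1-t)` (with `0 log 0 = 0`). -/
noncomputable def H (t : ℝ) : ℝ := -(t * Real.log t) - (1 - t) * Real.log (1 - t)

/-- `η` occurs as a consecutive substring of `ω` starting at position `s`. -/
def occursAt {p n : ℕ} (η : Fin p → Letter) (ω : Fin n → Letter) (s : ℕ) : Prop :=
  ∃ _h : s + p ≤ n, ∀ i : Fin p, η i = ω ⟨s + i.val, by have := i.isLt; omega⟩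

/-- `η` occurs as a consecutive substring of `ω`. -/
def occursIn {p n : ℕ} (η : Fin p → Letter) (ω : Fin n → Letter) : Prop :=
  ∃ s, occursAt η ω s

/-- The symbol forbidden at level `k`: `-1` for odd `k`, `+1` for even `k`. -/
def bad (k : ℕ) : Letter := if k % 2 = 1 then Letter.neg else Letter.pos

/-- The forbidden sets `F_k` of the construction of Section 4: strings of length `2ℓ_k - 1`
containing the bad symbol, or over the good alphabet with frequency of zeros `≥ r_k`,
or over the good alphabet containing a forbidden string of an earlier level of the same parity. -/
def Forb (ℓ : ℕ → ℕ) (r : ℕ → ℚ) (k : ℕ) : Set (Fin (2 * ℓ k - 1) → Letter) :=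
  {ω | ∃ i, ω i = bad k} ∪
    {ω | (∀ i, ω i ≠ bad k) ∧ (r k : ℝ) ≤ f0 ω} ∪
    {ω | (∀ i, ω i ≠ bad k) ∧
      ∃ k' : Fin k, 1 ≤ k'.val ∧ k'.val % 2 = k % 2 ∧
        ∃ η ∈ Forb ℓ r k'.val, occursIn η ω}
termination_by k
decreasing_by exact k'.isLt

open Classical in
/-- The locally admissible strings of length `2n-1`:  no string from `⋃_{k' ≡ parity, k' ≥ 1} F_{k'}`
occurs as a consecutive substring.  `parity = 1` corresponds to `X₊`, `parity = 0` to `X₋`. -/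
noncomputable def Padm (ℓ : ℕ → ℕ) (r : ℕ → ℚ) (parity : ℕ) (n : ℕ) :
    Finset (Fin (2 * n - 1) → Letter) :=
  Finset.univ.filter fun ω =>
    ∀ k, 1 ≤ k → k % 2 = parity → ∀ η ∈ Forb ℓ r k, ¬ occursIn η ω

/-- `m_k = (2ℓ_k - 1)/(2ℓ_{k-1} - 1)`. -/
def mblk (ℓ : ℕ → ℕ) (k : ℕ) : ℕ := (2 * ℓ k - 1) / (2 * ℓ (k - 1) - 1)

open Classical in
/-- Strings of length `N` which are concatenations of `m` blocks of length `L`,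
the blocks at the even positions (`0`-based) taken from `B` and the blocks at odd
positions equal to the constant block `g^L`. -/
noncomputable def CfromB {L : ℕ} (N m : ℕ) (g : Letter) (B : Finset (Fin L → Letter)) :
    Finset (Fin N → Letter) :=
  Finset.univ.filter fun ω => ∀ j < m,
    if j % 2 = 0 then ∃ η ∈ B, occursAt η ω (j * L)
    else occursAt (fun _ : Fin L => g) ω (j * L)

/-- `B₊,k = P_{X₊,ℓ_k} ∖ {(+1)^{2ℓ_k-1}}`. -/
noncomputable def Bplus (ℓ : ℕ → ℕ) (r : ℕ → ℚ) (k : ℕ) :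
    Finset (Fin (2 * ℓ k - 1) → Letter) :=
  Padm ℓ r 1 (ℓ k) \ {fun _ => Letter.pos}

/-- `B₋,k = P_{X₋,ℓ_k} ∖ {(-1)^{2ℓ_k-1}}`. -/
noncomputable def Bminus (ℓ : ℕ → ℕ) (r : ℕ → ℚ) (k : ℕ) :
    Finset (Fin (2 * ℓ k - 1) → Letter) :=
  Padm ℓ r 0 (ℓ k) \ {fun _ => Letter.neg}

/-- `C₊,k`: alternating concatenations of blocks from `B₊,k-1` and constant `+1` blocks. -/
noncomputable def Cplus (ℓ : ℕ → ℕ) (r : ℕ → ℚ) (k : ℕ) :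
    Finset (Fin (2 * ℓ k - 1) → Letter) :=
  CfromB (2 * ℓ k - 1) (mblk ℓ k) Letter.pos (Bplus ℓ r (k - 1))

/-- `C₋,k`: alternating concatenations of blocks from `B₋,k-1` and constant `-1` blocks. -/
noncomputable def Cminus (ℓ : ℕ → ℕ) (r : ℕ → ℚ) (k : ℕ) :
    Finset (Fin (2 * ℓ k - 1) → Letter) :=
  CfromB (2 * ℓ k - 1) (mblk ℓ k) Letter.neg (Bminus ℓ r (k - 1))

/-- The subshift `X_k ⊆ Σ^ℤ`: bi-infinite sequences in which no string of `F_k` occurs. -/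
def Xk (ℓ : ℕ → ℕ) (r : ℕ → ℚ) (k : ℕ) : Set (ℤ → Letter) :=
  {x | ∀ η ∈ Forb ℓ r k, ∀ j : ℤ, ¬ (∀ i : Fin (2 * ℓ k - 1), η i = x (j + (i.val : ℤ)))}

/-- `X₊ = ⋂_{m ≥ 1} X_{2m-1}`. -/
def Xplus (ℓ : ℕ → ℕ) (r : ℕ → ℚ) : Set (ℤ → Letter) :=
  {x | ∀ m, 1 ≤ m → x ∈ Xk ℓ r (2 * m - 1)}

/-- `X₋ = ⋂_{m ≥ 1} X_{2m}`. -/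
def Xminus (ℓ : ℕ → ℕ) (r : ℕ → ℚ) : Set (ℤ → Letter) :=
  {x | ∀ m, 1 ≤ m → x ∈ Xk ℓ r (2 * m)}


lemma ell_mono (ℓ : ℕ → ℕ) (hlmono : ∀ k, 1 ≤ k → ℓ k < ℓ (k + 1)) :
    ∀ a b, 1 ≤ a → a ≤ b → ℓ a ≤ ℓ b := by
  intro a b ha hab
  induction b with
  | zero => omega
  | succ n ih =>
    rcases Nat.lt_or_ge a (n + 1) with h | h
    · exact le_trans (ih (by omega)) (le_of_lt (hlmono n (by omega)))
    · have : a = n + 1 := by omega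
      simp [this]

lemma padm_avoid (ℓ : ℕ → ℕ) (r : ℕ → ℚ) (p b n : ℕ)
    (hb : 1 ≤ b) (hbp : b % 2 = p)
    (hM1 : 1 ≤ 2 * ℓ b - 1) (hMN : 2 * ℓ b - 1 ≤ 2 * n - 1)
    (ω : Fin (2 * n - 1) → Letter) (hω : ω ∈ Padm ℓ r p n) :
    ∀ i, ω i ≠ bad b := by
  intro i hcon
  have hiN : i.val < 2 * n - 1 := i.isLt
  set M := 2 * ℓ b - 1 with hM
  set s := min i.val (2 * n - 1 - M) with hs
  have hs1 : s ≤ i.val := min_le_left _ _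
  have hs2 : s ≤ 2 * n - 1 - M := min_le_right _ _
  have hs3 : s = i.val ∨ s = 2 * n - 1 - M := min_choice _ _
  have hsM : s + M ≤ 2 * n - 1 := by omega
  have hts : i.val - s < M := by omega
  set η : Fin M → Letter := fun t => ω ⟨s + t.val, by have := t.isLt; omega⟩ with hη
  have hmem : η ∈ Forb ℓ r b := by
    rw [Forb]
    refine Set.mem_union_left _ (Set.mem_union_left _ ⟨⟨i.val - s, hts⟩, ?_⟩)
    show ω ⟨s + (i.val - s), _⟩ = bad b
    have he : (⟨s + (i.val - s), by omega⟩ : Fin (2 * n - 1)) = i :=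
      Fin.ext (by simp; omega)
    rw [he]
    exact hcon
  simp only [Padm, Finset.mem_filter] at hω
  exact hω.2 b hb hbp η hmem ⟨s, hsM, fun t => rfl⟩

lemma bplus_zero (ℓ : ℕ → ℕ) (r : ℕ → ℚ)
    (hl1 : ℓ 1 = 4) (hlmono : ∀ k, 1 ≤ k → ℓ k < ℓ (k + 1))
    (j : ℕ) (hj : 1 ≤ j) (η : Fin (2 * ℓ j - 1) → Letter) (hη : η ∈ Bplus ℓ r j) :
    ∃ i, η i = Letter.zero := by
  rw [Bplus, Finset.mem_sdiff, Finset.mem_singleton] at hη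
  have hmono : ℓ 1 ≤ ℓ j := ell_mono ℓ hlmono 1 j le_rfl hj
  have havoid := padm_avoid ℓ r 1 1 (ℓ j) le_rfl rfl (by omega) (by omega) η hη.1
  have hne : ∃ i, η i ≠ Letter.pos := by
    by_contra h
    push_neg at h
    exact hη.2 (funext h)
  obtain ⟨i, hi⟩ := hne
  refine ⟨i, ?_⟩
  have hbad : bad 1 = Letter.neg := rfl
  have := havoid i
  rw [hbad] at this
  cases h : η i
  · exact absurd h this
  · rfl
  · exact absurd h hi

lemma bminus_zero (ℓ : ℕ → ℕ) (r : ℕ → ℚ)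
    (hl1 : ℓ 1 = 4) (hlmono : ∀ k, 1 ≤ k → ℓ k < ℓ (k + 1))
    (j : ℕ) (hj : 2 ≤ j) (η : Fin (2 * ℓ j - 1) → Letter) (hη : η ∈ Bminus ℓ r j) :
    ∃ i, η i = Letter.zero := by
  rw [Bminus, Finset.mem_sdiff, Finset.mem_singleton] at hη
  have h12 : ℓ 1 < ℓ 2 := hlmono 1 le_rfl
  have hmono : ℓ 2 ≤ ℓ j := ell_mono ℓ hlmono 2 j (by omega) hj
  have havoid := padm_avoid ℓ r 0 2 (ℓ j) (by omega) rfl (by omega) (by omega) η hη.1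
  have hne : ∃ i, η i ≠ Letter.neg := by
    by_contra h
    push_neg at h
    exact hη.2 (funext h)
  obtain ⟨i, hi⟩ := hne
  refine ⟨i, ?_⟩
  have hbad : bad 2 = Letter.pos := rfl
  have := havoid i
  rw [hbad] at this
  cases h : η i
  · exact absurd h hi
  · rfl
  · exact absurd h this

lemma evens_card (m : ℕ) :
    ((Finset.range m).filter (fun j => j % 2 = 0)).card = (m + 1) / 2 := by
  induction m with
  | zero => simp
  | succ n ih =>
    rw [Finset.range_add_one, Finset.filter_insert]
    by_cases h : n % 2 = 0
    · rw [if_pos h, Finset.card_insert_of_notMem (by simp), ih]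
      omega
    · rw [if_neg h, ih]
      omega

lemma cfreq {L : ℕ} (N m : ℕ) (g : Letter) (B : Finset (Fin L → Letter))
    (hL : 1 ≤ L) (hm : 1 ≤ m) (hN : N = m * L)
    (hB : ∀ η ∈ B, ∃ i, η i = Letter.zero)
    (ω : Fin N → Letter) (hω : ω ∈ CfromB N m g B) :
    (m : ℝ) / 2 ≤ ((Finset.univ.filter fun i => ω i = Letter.zero).card : ℝ) := by
  classical
  simp only [CfromB, Finset.mem_filter] at hω
  set evens := (Finset.range m).filter (fun j => j % 2 = 0) with hev
  have hN1 : 1 ≤ N := by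
    rw [hN]; exact Nat.one_le_iff_ne_zero.2 (by positivity)
  have hkey : ∀ j : ℕ, ∃ p : Fin N, j ∈ evens →
      (ω p = Letter.zero ∧ j * L ≤ p.val ∧ p.val < j * L + L) := by
    intro j
    by_cases hj : j ∈ evens
    · have hj' := Finset.mem_filter.1 hj
      have hjm : j < m := Finset.mem_range.1 hj'.1
      have hblk := hω.2 j hjm
      rw [if_pos hj'.2] at hblk
      obtain ⟨η, hηB, hle, hval⟩ := hblk
      obtain ⟨i0, hi0⟩ := hB η hηB
      have hi0L : i0.val < L := i0.isLt
      exact ⟨⟨j * L + i0.val, by omega⟩, fun _ =>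
        ⟨(hval i0).symm.trans hi0, Nat.le_add_right _ _, Nat.add_lt_add_left i0.isLt _⟩⟩
    · exact ⟨⟨0, by omega⟩, fun h => absurd h hj⟩
  choose f hf using hkey
  have hlt : ∀ a ∈ evens, ∀ b ∈ evens, a < b → (f a).val < (f b).val := by
    intro a ha b hb hab
    have h1 := hf a ha
    have h2 := hf b hb
    have e1 : a * L + L ≤ b * L := by
      calc a * L + L = (a + 1) * L := by ring
        _ ≤ b * L := Nat.mul_le_mul_right L (by omega)
    exact lt_of_lt_of_le (lt_of_lt_of_le h1.2.2 e1) h2.2.1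
  have hinj : Set.InjOn f evens := by
    intro a ha b hb hab
    rcases lt_trichotomy a b with h | h | h
    · have := hlt a ha b hb h
      rw [hab] at this
      exact absurd this (lt_irrefl _)
    · exact h
    · have := hlt b hb a ha h
      rw [hab] at this
      exact absurd this (lt_irrefl _)
  have hcard : evens.card ≤ (Finset.univ.filter fun i => ω i = Letter.zero).card :=
    Finset.card_le_card_of_injOn f
      (fun j hj => Finset.mem_filter.2 ⟨Finset.mem_univ _, (hf j hj).1⟩) hinj
  have hec : evens.card = (m + 1) / 2 := evens_card m
  have h2 : m ≤ 2 * (Finset.univ.filter fun i => ω i = Letter.zero).card := by omega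
  have := Nat.cast_le (α := ℝ).2 h2
  push_cast at this
  linarith

lemma numer (L N : ℕ) (rk c f : ℝ) (hN : 1 ≤ N)
    (hf : (((2 * L : ℕ)) : ℝ)⁻¹ ≤ f)
    (hS : 10 * (rk + 2 * ((N : ℝ))⁻¹ ^ 2 * Real.log N) ≤ (((2 * L : ℕ)) : ℝ)⁻¹)
    (hc1 : 1 ≤ c) (hc2 : c ≤ (N : ℝ) ^ 2) :
    10 * (rk * N + ((N : ℝ))⁻¹ * Real.log c) * N ≤ f * (N : ℝ) ^ 2 := by
  have hN0 : (0 : ℝ) < N := by exact_mod_cast hN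
  have hlogc : Real.log c ≤ 2 * Real.log N := by
    have h := Real.log_le_log (by linarith) hc2
    rwa [Real.log_pow, Nat.cast_ofNat] at h
  have h1 : 10 * (rk + 2 * ((N : ℝ))⁻¹ ^ 2 * Real.log N) * (N : ℝ) ^ 2 ≤
      (((2 * L : ℕ)) : ℝ)⁻¹ * (N : ℝ) ^ 2 := mul_le_mul_of_nonneg_right hS (sq_nonneg _)
  have h2 : (((2 * L : ℕ)) : ℝ)⁻¹ * (N : ℝ) ^ 2 ≤ f * (N : ℝ) ^ 2 :=
    mul_le_mul_of_nonneg_right hf (sq_nonneg _)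
  have hexp : 10 * (rk + 2 * ((N : ℝ))⁻¹ ^ 2 * Real.log N) * (N : ℝ) ^ 2 =
      10 * rk * (N : ℝ) ^ 2 + 20 * Real.log N := by
    field_simp
    ring
  have hlhs : 10 * (rk * N + ((N : ℝ))⁻¹ * Real.log c) * N =
      10 * rk * (N : ℝ) ^ 2 + 10 * Real.log c := by
    field_simp
  rw [hlhs]
  rw [hexp] at h1
  linarith

lemma main_half {L N : ℕ} (m : ℕ) (rk c : ℝ) (g : Letter)
    (B : Finset (Fin L → Letter))
    (hB : ∀ η ∈ B, ∃ i, η i = Letter.zero)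
    (hL1 : 1 ≤ L) (hdvdk : L ∣ N) (hLN : L ≤ N) (hm : m = N / L)
    (hS3k : 10 * (rk + 2 * ((N : ℝ))⁻¹ ^ 2 * Real.log N) ≤ (((2 * L : ℕ)) : ℝ)⁻¹)
    (hc1 : 1 ≤ c) (hc2 : c ≤ (N : ℝ) ^ 2)
    (ω : Fin N → Letter) (hω : ω ∈ CfromB N m g B) :
    10 * (rk * N + ((N : ℝ))⁻¹ * Real.log c) * N ≤ f0 ω * (N : ℝ) ^ 2 := by
  have hNm : N = m * L := by
    rw [hm]
    exact (Nat.div_mul_cancel hdvdk).symm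
  have hm1 : 1 ≤ m := by
    rw [hm]
    exact (Nat.one_le_div_iff (by omega)).2 hLN
  have hN1 : 1 ≤ N := by omega
  have hcf := cfreq N m g B hL1 hm1 hNm hB ω hω
  have hLpos : (0 : ℝ) < L := by exact_mod_cast hL1
  have hmpos : (0 : ℝ) < m := by exact_mod_cast hm1
  have hNpos : (0 : ℝ) < N := by exact_mod_cast hN1
  have hNcast : (N : ℝ) = (m : ℝ) * L := by exact_mod_cast congrArg (Nat.cast (R := ℝ)) hNm
  have hf0 : (((2 * L : ℕ)) : ℝ)⁻¹ ≤ f0 ω := by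
    rw [f0, le_div_iff₀ hNpos]
    have he : (((2 * L : ℕ)) : ℝ)⁻¹ * (N : ℝ) = (m : ℝ) / 2 := by
      rw [hNcast]
      push_cast
      field_simp
    rw [he]
    exact hcf
  exact numer L N rk c (f0 ω) hN1 hf0 hS3k hc1 hc2

theorem C_frequency_inequality (ℓ : ℕ → ℕ) (r : ℕ → ℚ)
    (hl1 : ℓ 1 = 4) (hlmono : ∀ k, 1 ≤ k → ℓ k < ℓ (k + 1))
    (hr1 : r 1 = 1 / 2) (hrpos : ∀ k, 1 ≤ k → 0 < r k) (hrhalf : ∀ k, 1 ≤ k → r k ≤ 1 / 2)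
    (hdvd : ∀ k, 2 ≤ k → (2 * ℓ (k - 1) - 1) ∣ (2 * ℓ k - 1))
    (hS1 : ∀ k, 1 ≤ k → 1 < ((2 * ℓ k - 1 : ℕ) : ℝ) * (r k : ℝ))
    (hS2 : ∀ k, 1 ≤ k → 10 * H ((r (k + 1) : ℝ)) ≤ 1 / 2 * (r k : ℝ) * Real.log 2)
    (hS3 : ∀ k, 1 ≤ k →
      10 * ((r (k + 1) : ℝ) + 2 * (((2 * ℓ (k + 1) - 1 : ℕ) : ℝ))⁻¹ ^ 2 *
        Real.log ((2 * ℓ (k + 1) - 1 : ℕ) : ℝ)) ≤ ((4 * ℓ k - 2 : ℕ) : ℝ)⁻¹)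
    (hS4 : ∀ k, 1 ≤ k → 2 ^ (4 * ℓ k) ≤ ℓ (k + 1)) :
    (∀ k, 2 ≤ k → k % 2 = 0 → ∀ c : ℝ, 1 ≤ c → c ≤ ((2 * ℓ k - 1 : ℕ) : ℝ) ^ 2 →
      ∀ ω ∈ Cplus ℓ r k,
        10 * ((r k : ℝ) * ((2 * ℓ k - 1 : ℕ) : ℝ) +
            (((2 * ℓ k - 1 : ℕ) : ℝ))⁻¹ * Real.log c) * ((2 * ℓ k - 1 : ℕ) : ℝ) ≤
          f0 ω * ((2 * ℓ k - 1 : ℕ) : ℝ) ^ 2) ∧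
    (∀ k, 3 ≤ k → k % 2 = 1 → ∀ c : ℝ, 1 ≤ c → c ≤ ((2 * ℓ k - 1 : ℕ) : ℝ) ^ 2 →
      ∀ ω ∈ Cminus ℓ r k,
        10 * ((r k : ℝ) * ((2 * ℓ k - 1 : ℕ) : ℝ) +
            (((2 * ℓ k - 1 : ℕ) : ℝ))⁻¹ * Real.log c) * ((2 * ℓ k - 1 : ℕ) : ℝ) ≤
          f0 ω * ((2 * ℓ k - 1 : ℕ) : ℝ) ^ 2) := by
  constructor
  · intro k hk _ c hc1 hc2 ω hω
    have hj1 : 1 ≤ k - 1 := by omega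
    have hl4 : 4 ≤ ℓ (k - 1) := hl1 ▸ ell_mono ℓ hlmono 1 (k - 1) le_rfl hj1
    have hLN : 2 * ℓ (k - 1) - 1 ≤ 2 * ℓ k - 1 := by
      have := ell_mono ℓ hlmono (k - 1) k hj1 (by omega)
      omega
    have h3 := hS3 (k - 1) hj1
    rw [show k - 1 + 1 = k from by omega,
      show 4 * ℓ (k - 1) - 2 = 2 * (2 * ℓ (k - 1) - 1) from by omega] at h3
    rw [Cplus] at hω
    exact main_half (mblk ℓ k) (r k : ℝ) c Letter.pos (Bplus ℓ r (k - 1))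
      (fun η hη => bplus_zero ℓ r hl1 hlmono (k - 1) hj1 η hη)
      (by omega) (hdvd k hk) hLN rfl h3 hc1 hc2 ω hω
  · intro k hk _ c hc1 hc2 ω hω
    have hj1 : 2 ≤ k - 1 := by omega
    have hl4 : 4 ≤ ℓ (k - 1) := hl1 ▸ ell_mono ℓ hlmono 1 (k - 1) le_rfl (by omega)
    have hLN : 2 * ℓ (k - 1) - 1 ≤ 2 * ℓ k - 1 := by
      have := ell_mono ℓ hlmono (k - 1) k (by omega) (by omega)
      omega
    have h3 := hS3 (k - 1) (by omega)
    rw [show k - 1 + 1 = k from by omega,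
      show 4 * ℓ (k - 1) - 2 = 2 * (2 * ℓ (k - 1) - 1) from by omega] at h3
    rw [Cminus] at hω
    exact main_half (mblk ℓ k) (r k : ℝ) c Letter.neg (Bminus ℓ r (k - 1))
      (fun η hη => bminus_zero ℓ r hl1 hlmono (k - 1) hj1 η hη)
      (by omega) (hdvd k (by omega)) hLN rfl h3 hc1 hc2 ω hω
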